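/- Normalization for simply typed lambda calculus: there is a function nbe from well-typed terms (up to βη-equality) to normal forms such that (1) βη-equal terms have equal normal forms, (2) terms with equal normal forms are βη-equal, and (3) every normal form, viewed as a term, is mapped to itself. -/

import Mathlib

/-! Simply typed lambda calculus with unit, products, functions and a base
type `Ans` with two constants `yes`, `no` (no eliminator), in intrinsically
typed de Bruijn representation, together with βη judgemental equality and
normal/neutral forms. -/

/-- Types of the STLC. -/
inductive Ty : Type
  | unit : Ty
  | ans : Ty
  | prod : Ty → Ty → Ty
  | arrow : Ty → Ty → Ty

/-- Contexts are lists of types (de Bruijn). -/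
abbrev Ctx := List Ty

/-- Typed de Bruijn variables. -/
inductive Var : Ctx → Ty → Type
  | zero {Γ A} : Var (A :: Γ) A
  | succ {Γ A B} : Var Γ A → Var (B :: Γ) A

/-- Well-typed terms. -/
inductive Tm : Ctx → Ty → Type
  | var {Γ A} : Var Γ A → Tm Γ A
  | yes {Γ} : Tm Γ .ans
  | no {Γ} : Tm Γ .ans
  | unit {Γ} : Tm Γ .unit
  | pair {Γ A B} : Tm Γ A → Tm Γ B → Tm Γ (.prod A B)
  | fst {Γ A B} : Tm Γ (.prod A B) → Tm Γ A
  | snd {Γ A B} : Tm Γ (.prod A B) → Tm Γ B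
  | lam {Γ A B} : Tm (A :: Γ) B → Tm Γ (.arrow A B)
  | app {Γ A B} : Tm Γ (.arrow A B) → Tm Γ A → Tm Γ B

/-- A renaming `Θ ⊢ σ : Γ` maps variables of `Γ` to variables of `Θ`. -/
def Ren (Θ Γ : Ctx) : Type := ∀ A, Var Γ A → Var Θ A

/-- Extend a renaming under a binder. -/
def Ren.lift {Θ Γ : Ctx} {A : Ty} (r : Ren Θ Γ) : Ren (A :: Θ) (A :: Γ) :=
  fun _ v =>
    match v with
    | .zero => .zero
    | .succ v => .succ (r _ v)

/-- The weakening renaming. -/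
def Ren.wk {Γ : Ctx} {A : Ty} : Ren (A :: Γ) Γ := fun _ v => .succ v

/-- Action of renamings on terms. -/
def rename {Θ Γ : Ctx} (r : Ren Θ Γ) : ∀ {A}, Tm Γ A → Tm Θ A
  | _, .var v => .var (r _ v)
  | _, .yes => .yes
  | _, .no => .no
  | _, .unit => .unit
  | _, .pair a b => .pair (rename r a) (rename r b)
  | _, .fst p => .fst (rename r p)
  | _, .snd p => .snd (rename r p)
  | _, .lam t => .lam (rename r.lift t)
  | _, .app f a => .app (rename r f) (rename r a)

/-- A substitution `Θ ⊢ σ : Γ` maps variables of `Γ` to terms over `Θ`. -/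
def Subst (Θ Γ : Ctx) : Type := ∀ A, Var Γ A → Tm Θ A

/-- Extend a substitution under a binder. -/
def Subst.lift {Θ Γ : Ctx} {A : Ty} (s : Subst Θ Γ) : Subst (A :: Θ) (A :: Γ) :=
  fun _ v =>
    match v with
    | .zero => .var .zero
    | .succ v => rename Ren.wk (s _ v)

/-- Action of substitutions on terms. -/
def subst {Θ Γ : Ctx} (s : Subst Θ Γ) : ∀ {A}, Tm Γ A → Tm Θ A
  | _, .var v => s _ v
  | _, .yes => .yes
  | _, .no => .no
  | _, .unit => .unit
  | _, .pair a b => .pair (subst s a) (subst s b)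
  | _, .fst p => .fst (subst s p)
  | _, .snd p => .snd (subst s p)
  | _, .lam t => .lam (subst s.lift t)
  | _, .app f a => .app (subst s f) (subst s a)

/-- The substitution sending the last variable to `a` and the others to
themselves. -/
def Subst.single {Γ : Ctx} {A : Ty} (a : Tm Γ A) : Subst Γ (A :: Γ)
  | _, .zero => a
  | _, .succ v => .var v

/-- Substitution of a single term for the last variable. -/
def subst1 {Γ : Ctx} {A B : Ty} (a : Tm Γ A) (t : Tm (A :: Γ) B) : Tm Γ B :=
  subst (Subst.single a) t

/-- βη judgemental equality of well-typed terms. -/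
inductive Jeq : ∀ {Γ : Ctx} {A : Ty}, Tm Γ A → Tm Γ A → Prop
  | refl {Γ A} (t : Tm Γ A) : Jeq t t
  | symm {Γ A} {t s : Tm Γ A} : Jeq t s → Jeq s t
  | trans {Γ A} {t s u : Tm Γ A} : Jeq t s → Jeq s u → Jeq t u
  | pair_congr {Γ A B} {a a' : Tm Γ A} {b b' : Tm Γ B} :
      Jeq a a' → Jeq b b' → Jeq (.pair a b) (.pair a' b')
  | fst_congr {Γ A B} {p p' : Tm Γ (.prod A B)} : Jeq p p' → Jeq (.fst p) (.fst p')
  | snd_congr {Γ A B} {p p' : Tm Γ (.prod A B)} : Jeq p p' → Jeq (.snd p) (.snd p')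
  | lam_congr {Γ A B} {t t' : Tm (A :: Γ) B} : Jeq t t' → Jeq (.lam t) (.lam t')
  | app_congr {Γ A B} {f f' : Tm Γ (.arrow A B)} {a a' : Tm Γ A} :
      Jeq f f' → Jeq a a' → Jeq (.app f a) (.app f' a')
  | beta {Γ A B} (t : Tm (A :: Γ) B) (a : Tm Γ A) :
      Jeq (.app (.lam t) a) (subst1 a t)
  | eta {Γ A B} (f : Tm Γ (.arrow A B)) :
      Jeq f (.lam (.app (rename Ren.wk f) (.var .zero)))
  | beta_fst {Γ A B} (a : Tm Γ A) (b : Tm Γ B) : Jeq (.fst (.pair a b)) a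
  | beta_snd {Γ A B} (a : Tm Γ A) (b : Tm Γ B) : Jeq (.snd (.pair a b)) b
  | eta_pair {Γ A B} (p : Tm Γ (.prod A B)) : Jeq p (.pair (.fst p) (.snd p))
  | eta_unit {Γ} (t : Tm Γ .unit) : Jeq t .unit

mutual
  /-- Normal forms. -/
  inductive Nf : ∀ {Γ : Ctx} {A : Ty}, Tm Γ A → Prop
    | yes {Γ} : Nf (.yes : Tm Γ .ans)
    | no {Γ} : Nf (.no : Tm Γ .ans)
    | unit {Γ} : Nf (.unit : Tm Γ .unit)
    | pair {Γ A B} {a : Tm Γ A} {b : Tm Γ B} : Nf a → Nf b → Nf (.pair a b)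
    | lam {Γ A B} {t : Tm (A :: Γ) B} : Nf t → Nf (.lam t)
    | ne_ans {Γ} {t : Tm Γ .ans} : Ne' t → Nf t

  /-- Neutral forms. -/
  inductive Ne' : ∀ {Γ : Ctx} {A : Ty}, Tm Γ A → Prop
    | var {Γ A} (v : Var Γ A) : Ne' (.var v)
    | fst {Γ A B} {p : Tm Γ (.prod A B)} : Ne' p → Ne' (.fst p)
    | snd {Γ A B} {p : Tm Γ (.prod A B)} : Ne' p → Ne' (.snd p)
    | app {Γ A B} {f : Tm Γ (.arrow A B)} {a : Tm Γ A} :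
        Ne' f → Nf a → Ne' (.app f a)
end

namespace NBE

/-! ### Syntactic lemmas about renaming and substitution -/

theorem lift_comp {Θ Δ Γ : Ctx} {A : Ty} (r : Ren Θ Δ) (r' : Ren Δ Γ) :
    (fun B v => Ren.lift (A := A) r B (Ren.lift r' B v)) = Ren.lift (fun B v => r B (r' B v)) := by
  funext B v; cases v <;> rfl

theorem lift_id {Γ : Ctx} {A : Ty} :
    (Ren.lift (A := A) (fun (B : Ty) (v : Var Γ B) => v)) = fun B v => v := by
  funext B v; cases v <;> rfl

theorem rename_rename {Γ A} (t : Tm Γ A) : ∀ {Δ Θ : Ctx} (r : Ren Θ Δ) (r' : Ren Δ Γ),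
    rename r (rename r' t) = rename (fun B v => r B (r' B v)) t := by
  induction t with
  | var v => intros; rfl
  | yes => intros; rfl
  | no => intros; rfl
  | unit => intros; rfl
  | pair a b iha ihb => intro _ _ r r'; simp only [rename, iha, ihb]
  | fst p ih => intro _ _ r r'; simp only [rename, ih]
  | snd p ih => intro _ _ r r'; simp only [rename, ih]
  | app f a ihf iha => intro _ _ r r'; simp only [rename, ihf, iha]
  | lam t ih => intro _ _ r r'; simp only [rename, ih, lift_comp]

theorem rename_id {Γ A} (t : Tm Γ A) : rename (fun _ v => v) t = t := by
  induction t with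
  | var v => rfl
  | yes => rfl
  | no => rfl
  | unit => rfl
  | pair a b iha ihb => simp only [rename, iha, ihb]
  | fst p ih => simp only [rename, ih]
  | snd p ih => simp only [rename, ih]
  | app f a ihf iha => simp only [rename, ihf, iha]
  | lam t ih => simp only [rename, lift_id, ih]

theorem slift_ren {Θ Δ Γ : Ctx} {A : Ty} (σ : Subst Θ Δ) (r : Ren Δ Γ) :
    (fun B v => Subst.lift (A := A) σ B (Ren.lift r B v)) = Subst.lift (fun B v => σ B (r B v)) := by
  funext B v; cases v <;> rfl

theorem subst_rename {Γ A} (t : Tm Γ A) : ∀ {Δ Θ : Ctx} (σ : Subst Θ Δ) (r : Ren Δ Γ),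
    subst σ (rename r t) = subst (fun B v => σ B (r B v)) t := by
  induction t with
  | var v => intros; rfl
  | yes => intros; rfl
  | no => intros; rfl
  | unit => intros; rfl
  | pair a b iha ihb => intro _ _ σ r; simp only [rename, subst, iha, ihb]
  | fst p ih => intro _ _ σ r; simp only [rename, subst, ih]
  | snd p ih => intro _ _ σ r; simp only [rename, subst, ih]
  | app f a ihf iha => intro _ _ σ r; simp only [rename, subst, ihf, iha]
  | lam t ih => intro _ _ σ r; simp only [rename, subst, ih, slift_ren]

theorem ren_slift {Θ Δ Γ : Ctx} {A : Ty} (r : Ren Θ Δ) (σ : Subst Δ Γ) :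
    (fun B v => rename (Ren.lift (A := A) r) (Subst.lift σ B v)) = Subst.lift (fun B v => rename r (σ B v)) := by
  funext B v
  cases v with
  | zero => rfl
  | succ v =>
      show rename (Ren.lift r) (rename Ren.wk (σ _ v)) = rename Ren.wk (rename r (σ _ v))
      rw [rename_rename, rename_rename]
      rfl

theorem rename_subst {Γ A} (t : Tm Γ A) : ∀ {Δ Θ : Ctx} (r : Ren Θ Δ) (σ : Subst Δ Γ),
    rename r (subst σ t) = subst (fun B v => rename r (σ B v)) t := by
  induction t with
  | var v => intros; rfl
  | yes => intros; rfl
  | no => intros; rfl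
  | unit => intros; rfl
  | pair a b iha ihb => intro _ _ r σ; simp only [rename, subst, iha, ihb]
  | fst p ih => intro _ _ r σ; simp only [rename, subst, ih]
  | snd p ih => intro _ _ r σ; simp only [rename, subst, ih]
  | app f a ihf iha => intro _ _ r σ; simp only [rename, subst, ihf, iha]
  | lam t ih => intro _ _ r σ; simp only [rename, subst, ih, ren_slift]

theorem slift_slift {Θ Δ Γ : Ctx} {A : Ty} (τ : Subst Θ Δ) (σ : Subst Δ Γ) :
    (fun B v => subst (Subst.lift (A := A) τ) (Subst.lift σ B v)) = Subst.lift (fun B v => subst τ (σ B v)) := by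
  funext B v
  cases v with
  | zero => rfl
  | succ v =>
      show subst (Subst.lift τ) (rename Ren.wk (σ _ v)) = rename Ren.wk (subst τ (σ _ v))
      rw [subst_rename, rename_subst]
      rfl

theorem subst_subst {Γ A} (t : Tm Γ A) : ∀ {Δ Θ : Ctx} (τ : Subst Θ Δ) (σ : Subst Δ Γ),
    subst τ (subst σ t) = subst (fun B v => subst τ (σ B v)) t := by
  induction t with
  | var v => intros; rfl
  | yes => intros; rfl
  | no => intros; rfl
  | unit => intros; rfl
  | pair a b iha ihb => intro _ _ τ σ; simp only [subst, iha, ihb]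
  | fst p ih => intro _ _ τ σ; simp only [subst, ih]
  | snd p ih => intro _ _ τ σ; simp only [subst, ih]
  | app f a ihf iha => intro _ _ τ σ; simp only [subst, ihf, iha]
  | lam t ih => intro _ _ τ σ; simp only [subst, ih, slift_slift]

theorem subst_of_ren {Γ A} (t : Tm Γ A) : ∀ {Θ : Ctx} (r : Ren Θ Γ),
    subst (fun B v => Tm.var (r B v)) t = rename r t := by
  induction t with
  | var v => intros; rfl
  | yes => intros; rfl
  | no => intros; rfl
  | unit => intros; rfl
  | pair a b iha ihb => intro _ r; simp only [subst, rename, iha, ihb]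
  | fst p ih => intro _ r; simp only [subst, rename, ih]
  | snd p ih => intro _ r; simp only [subst, rename, ih]
  | app f a ihf iha => intro _ r; simp only [subst, rename, ihf, iha]
  | lam t ih =>
      intro _ r
      simp only [subst, rename]
      rw [← ih (Ren.lift r)]
      refine congrArg Tm.lam (congrArg (fun σ => subst σ t) ?_)
      funext B v; cases v <;> rfl

theorem subst_id {Γ A} (t : Tm Γ A) : subst (fun _ v => Tm.var v) t = t := by
  have := subst_of_ren t (fun _ v => v)
  rwa [rename_id] at this

/-- Renaming of a single substitution. -/
theorem rename_subst1 {Γ Θ : Ctx} {A B : Ty} (r : Ren Θ Γ) (a : Tm Γ A) (t : Tm (A :: Γ) B) :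
    rename r (subst1 a t) = subst1 (rename r a) (rename (Ren.lift r) t) := by
  unfold subst1
  rw [rename_subst, subst_rename]
  congr 1
  funext B v
  cases v with
  | zero => rfl
  | succ v => rfl

theorem jeq_ren {Γ A} {t s : Tm Γ A} (h : Jeq t s) : ∀ {Θ : Ctx} (r : Ren Θ Γ),
    Jeq (rename r t) (rename r s) := by
  induction h with
  | refl t => intros; exact Jeq.refl _
  | symm _ ih => intro _ r; exact (ih r).symm
  | trans _ _ ih1 ih2 => intro _ r; exact (ih1 r).trans (ih2 r)
  | pair_congr _ _ ih1 ih2 => intro _ r; exact Jeq.pair_congr (ih1 r) (ih2 r)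
  | fst_congr _ ih => intro _ r; exact Jeq.fst_congr (ih r)
  | snd_congr _ ih => intro _ r; exact Jeq.snd_congr (ih r)
  | lam_congr _ ih => intro _ r; exact Jeq.lam_congr (ih _)
  | app_congr _ _ ih1 ih2 => intro _ r; exact Jeq.app_congr (ih1 r) (ih2 r)
  | beta t a =>
      intro _ r
      have := Jeq.beta (rename (Ren.lift r) t) (rename r a)
      rw [← rename_subst1] at this
      exact this
  | eta f =>
      intro _ r
      have h2 := Jeq.eta (rename r f)
      simp only [rename]
      rw [rename_rename]
      rw [rename_rename] at h2
      exact h2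
  | beta_fst a b => intro _ r; exact Jeq.beta_fst _ _
  | beta_snd a b => intro _ r; exact Jeq.beta_snd _ _
  | eta_pair p => intro _ r; exact Jeq.eta_pair _
  | eta_unit t => intro _ r; exact Jeq.eta_unit _

end NBE
namespace NBE

theorem nf_rename {Γ : Ctx} {A : Ty} {t : Tm Γ A} (h : Nf t) :
    ∀ {Θ : Ctx} (r : Ren Θ Γ), Nf (rename r t) := by
  refine Nf.rec
    (motive_1 := fun {Γ A} (t : Tm Γ A) _ => ∀ {Θ : Ctx} (r : Ren Θ Γ), Nf (rename r t))
    (motive_2 := fun {Γ A} (t : Tm Γ A) _ => ∀ {Θ : Ctx} (r : Ren Θ Γ), Ne' (rename r t))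
    ?_ ?_ ?_ ?_ ?_ ?_ ?_ ?_ ?_ ?_ h
  · intro _ _ r; exact Nf.yes
  · intro _ _ r; exact Nf.no
  · intro _ _ r; exact Nf.unit
  · intro _ _ _ _ _ _ _ iha ihb _ r; exact Nf.pair (iha r) (ihb r)
  · intro _ _ _ _ _ ih _ r; exact Nf.lam (ih _)
  · intro _ _ _ ih _ r; exact Nf.ne_ans (ih r)
  · intro _ _ v _ r; exact Ne'.var _
  · intro _ _ _ _ _ ih _ r; exact Ne'.fst (ih r)
  · intro _ _ _ _ _ ih _ r; exact Ne'.snd (ih r)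
  · intro _ _ _ _ _ _ _ ihf iha _ r; exact Ne'.app (ihf r) (iha r)

theorem ne_rename {Γ : Ctx} {A : Ty} {t : Tm Γ A} (h : Ne' t) :
    ∀ {Θ : Ctx} (r : Ren Θ Γ), Ne' (rename r t) := by
  refine Ne'.rec
    (motive_1 := fun {Γ A} (t : Tm Γ A) _ => ∀ {Θ : Ctx} (r : Ren Θ Γ), Nf (rename r t))
    (motive_2 := fun {Γ A} (t : Tm Γ A) _ => ∀ {Θ : Ctx} (r : Ren Θ Γ), Ne' (rename r t))
    ?_ ?_ ?_ ?_ ?_ ?_ ?_ ?_ ?_ ?_ h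
  · intro _ _ r; exact Nf.yes
  · intro _ _ r; exact Nf.no
  · intro _ _ r; exact Nf.unit
  · intro _ _ _ _ _ _ _ iha ihb _ r; exact Nf.pair (iha r) (ihb r)
  · intro _ _ _ _ _ ih _ r; exact Nf.lam (ih _)
  · intro _ _ _ ih _ r; exact Nf.ne_ans (ih r)
  · intro _ _ v _ r; exact Ne'.var _
  · intro _ _ _ _ _ ih _ r; exact Ne'.fst (ih r)
  · intro _ _ _ _ _ ih _ r; exact Ne'.snd (ih r)
  · intro _ _ _ _ _ _ _ ihf iha _ r; exact Ne'.app (ihf r) (iha r)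

end NBE
namespace NBE

/-! ### Kripke semantic domain with naturality baked in -/

def VP : Ty → PSigma fun V : Ctx → Type => ∀ ⦃Θ Γ : Ctx⦄, Ren Θ Γ → V Γ → V Θ
  | .unit => ⟨fun _ => PUnit, fun _ _ _ _ => PUnit.unit⟩
  | .ans => ⟨fun Γ => {t : Tm Γ .ans // Nf t}, fun _ _ r a => ⟨rename r a.1, nf_rename a.2 r⟩⟩
  | .prod A B => ⟨fun Γ => (VP A).1 Γ × (VP B).1 Γ,
      fun _ _ r p => ((VP A).2 r p.1, (VP B).2 r p.2)⟩
  | .arrow A B =>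
      ⟨fun Γ => {f : ∀ Θ : Ctx, Ren Θ Γ → (VP A).1 Θ → (VP B).1 Θ //
          ∀ (Θ Θ' : Ctx) (r : Ren Θ Γ) (r' : Ren Θ' Θ) (a : (VP A).1 Θ),
            (VP B).2 r' (f Θ r a) = f Θ' (fun C v => r' C (r C v)) ((VP A).2 r' a)},
       fun _ _ r f => ⟨fun Θ' r2 a => f.1 Θ' (fun C v => r2 C (r C v)) a,
         fun _ _ r1 r2 a => f.2 _ _ _ r2 a⟩⟩

abbrev Val (A : Ty) (Γ : Ctx) : Type := (VP A).1 Γ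

def renVal {A : Ty} {Θ Γ : Ctx} (r : Ren Θ Γ) (a : Val A Γ) : Val A Θ := (VP A).2 r a

theorem renVal_id : ∀ (A : Ty) {Γ : Ctx} (a : Val A Γ), renVal (fun _ v => v) a = a
  | .unit, _, _ => rfl
  | .ans, _, a => Subtype.ext (rename_id a.1)
  | .prod A B, _, p => by
      show ((VP A).2 _ p.1, (VP B).2 _ p.2) = p
      rw [show (VP A).2 (fun _ v => v) p.1 = p.1 from renVal_id A p.1,
          show (VP B).2 (fun _ v => v) p.2 = p.2 from renVal_id B p.2]
      rfl
  | .arrow A B, _, f => by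
      apply Subtype.ext
      funext Θ r a
      rfl

theorem renVal_comp : ∀ (A : Ty) {Γ Δ Θ : Ctx} (r : Ren Θ Δ) (r' : Ren Δ Γ) (a : Val A Γ),
    renVal r (renVal r' a) = renVal (fun B v => r B (r' B v)) a
  | .unit, _, _, _, _, _, _ => rfl
  | .ans, _, _, _, r, r', a => Subtype.ext (rename_rename a.1 r r')
  | .prod A B, _, _, _, r, r', p => by
      show ((VP A).2 r ((VP A).2 r' p.1), (VP B).2 r ((VP B).2 r' p.2)) = _
      rw [show (VP A).2 r ((VP A).2 r' p.1) = (VP A).2 (fun B v => r B (r' B v)) p.1 from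
            renVal_comp A r r' p.1,
          show (VP B).2 r ((VP B).2 r' p.2) = (VP B).2 (fun B v => r B (r' B v)) p.2 from
            renVal_comp B r r' p.2]
      rfl
  | .arrow A B, _, _, _, r, r', f => by
      apply Subtype.ext
      funext Θ r2 a
      rfl

/-! ### Environments and evaluation -/

def Env (Γ Θ : Ctx) : Type := ∀ A, Var Γ A → Val A Θ

def renEnv {Γ Θ Θ' : Ctx} (r : Ren Θ' Θ) (ρ : Env Γ Θ) : Env Γ Θ' :=
  fun A v => renVal r (ρ A v)

def consEnv {Γ Θ : Ctx} {A : Ty} (a : Val A Θ) (ρ : Env Γ Θ) : Env (A :: Γ) Θ :=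
  fun B v =>
    match v with
    | .zero => a
    | .succ v => ρ B v

theorem renEnv_comp {Γ Θ Δ Θ' : Ctx} (r : Ren Θ' Δ) (r' : Ren Δ Θ) (ρ : Env Γ Θ) :
    renEnv r (renEnv r' ρ) = renEnv (fun B v => r B (r' B v)) ρ := by
  funext A v; exact renVal_comp _ r r' (ρ A v)

theorem renEnv_cons {Γ Θ Θ' : Ctx} {A : Ty} (r : Ren Θ' Θ) (a : Val A Θ) (ρ : Env Γ Θ) :
    renEnv r (consEnv a ρ) = consEnv (renVal r a) (renEnv r ρ) := by
  funext B v; cases v <;> rfl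

/-- Evaluation into the Kripke model, packaged with naturality. -/
def eval : ∀ {Γ : Ctx} {A : Ty}, Tm Γ A →
    PSigma fun f : ∀ Θ : Ctx, Env Γ Θ → Val A Θ =>
      ∀ (Θ Θ' : Ctx) (ρ : Env Γ Θ) (r : Ren Θ' Θ), renVal r (f Θ ρ) = f Θ' (renEnv r ρ)
  | _, _, .var v => ⟨fun _ ρ => ρ _ v, fun _ _ _ _ => rfl⟩
  | _, _, .yes => ⟨fun _ _ => ⟨.yes, Nf.yes⟩, fun _ _ _ _ => rfl⟩
  | _, _, .no => ⟨fun _ _ => ⟨.no, Nf.no⟩, fun _ _ _ _ => rfl⟩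
  | _, _, .unit => ⟨fun _ _ => PUnit.unit, fun _ _ _ _ => rfl⟩
  | _, _, .pair a b =>
      ⟨fun _ ρ => ((eval a).1 _ ρ, (eval b).1 _ ρ), by
        intro Θ Θ' ρ r
        show ((VP _).2 r ((eval a).1 _ ρ), (VP _).2 r ((eval b).1 _ ρ)) = _
        rw [show (VP _).2 r ((eval a).1 _ ρ) = renVal r ((eval a).1 _ ρ) from rfl,
            show (VP _).2 r ((eval b).1 _ ρ) = renVal r ((eval b).1 _ ρ) from rfl,
            (eval a).2 _ _ ρ r, (eval b).2 _ _ ρ r]⟩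
  | _, _, .fst p =>
      ⟨fun _ ρ => ((eval p).1 _ ρ).1, by
        intro Θ Θ' ρ r
        show (renVal r ((eval p).1 _ ρ)).1 = _
        rw [(eval p).2 _ _ ρ r]⟩
  | _, _, .snd p =>
      ⟨fun _ ρ => ((eval p).1 _ ρ).2, by
        intro Θ Θ' ρ r
        show (renVal r ((eval p).1 _ ρ)).2 = _
        rw [(eval p).2 _ _ ρ r]⟩
  | _, _, .app f a =>
      ⟨fun _ ρ => ((eval f).1 _ ρ).1 _ (fun _ v => v) ((eval a).1 _ ρ), by
        intro Θ Θ' ρ r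
        have h1 := ((eval f).1 _ ρ).2 _ _ (fun _ v => v) r ((eval a).1 _ ρ)
        refine h1.trans ?_
        show _ = ((eval f).1 Θ' (renEnv r ρ)).1 Θ' (fun _ v => v) ((eval a).1 Θ' (renEnv r ρ))
        rw [← (eval f).2 _ _ ρ r, ← (eval a).2 _ _ ρ r]
        rfl⟩
  | _, _, .lam t =>
      ⟨fun _ ρ => ⟨fun Θ' r a => (eval t).1 _ (consEnv a (renEnv r ρ)),
         by
          intro Θ1 Θ2 r1 r2 a
          show renVal r2 ((eval t).1 _ _) = _
          rw [(eval t).2 _ _ _ r2, renEnv_cons, renEnv_comp]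
          rfl⟩,
       by
        intro Θ Θ' ρ r
        apply Subtype.ext
        funext Θ2 r2 a
        show (eval t).1 _ (consEnv a (renEnv (fun C v => r2 C (r C v)) ρ)) =
          (eval t).1 _ (consEnv a (renEnv r2 (renEnv r ρ)))
        rw [renEnv_comp]⟩

end NBE
namespace NBE
theorem val_nat {A B : Ty} {Γ Θ Θ' : Ctx} (f : Val (Ty.arrow A B) Γ) (r : Ren Θ Γ)
    (r' : Ren Θ' Θ) (a : Val A Θ) :
    renVal r' (f.1 Θ r a) = f.1 Θ' (fun C v => r' C (r C v)) (renVal r' a) := f.2 _ _ _ _ _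
end NBE
namespace NBE

/-! ### Reify and reflect, with naturality, by recursion on types -/

def RR : ∀ A : Ty,
    PSigma fun reify : ∀ {Γ : Ctx}, Val A Γ → Tm Γ A =>
    PSigma fun reflect : ∀ {Γ : Ctx} (t : Tm Γ A), Ne' t → Val A Γ =>
      (∀ {Γ : Ctx} (a : Val A Γ), Nf (reify a)) ∧
      (∀ {Γ Θ : Ctx} (r : Ren Θ Γ) (a : Val A Γ),
        rename r (reify a) = reify (renVal r a)) ∧
      (∀ {Γ Θ : Ctx} (r : Ren Θ Γ) (t : Tm Γ A) (h : Ne' t),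
        renVal r (reflect t h) = reflect (rename r t) (ne_rename h r))
  | .unit =>
      ⟨fun _ => Tm.unit, ⟨fun _ _ => PUnit.unit,
        ⟨fun _ => Nf.unit, fun _ _ => rfl, fun _ _ _ => rfl⟩⟩⟩
  | .ans =>
      ⟨fun a => a.1, ⟨fun t h => ⟨t, Nf.ne_ans h⟩,
        ⟨fun a => a.2, fun _ _ => rfl, fun _ _ _ => rfl⟩⟩⟩
  | .prod A B =>
      ⟨fun p => Tm.pair ((RR A).1 p.1) ((RR B).1 p.2),
       ⟨fun t h => ((RR A).2.1 (Tm.fst t) (Ne'.fst h), (RR B).2.1 (Tm.snd t) (Ne'.snd h)),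
        ⟨fun p => Nf.pair ((RR A).2.2.1 p.1) ((RR B).2.2.1 p.2),
         by
          intro Γ Θ r p
          show Tm.pair (rename r ((RR A).1 p.1)) (rename r ((RR B).1 p.2)) = _
          rw [(RR A).2.2.2.1 r p.1, (RR B).2.2.2.1 r p.2]
          rfl,
         by
          intro Γ Θ r t h
          show ((renVal r ((RR A).2.1 (Tm.fst t) (Ne'.fst h))),
                (renVal r ((RR B).2.1 (Tm.snd t) (Ne'.snd h)))) = _
          rw [(RR A).2.2.2.2 r _ (Ne'.fst h), (RR B).2.2.2.2 r _ (Ne'.snd h)]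
          rfl⟩⟩⟩
  | .arrow A B =>
      have hcongr : ∀ {Γ : Ctx} (u u' : Tm Γ B) (hu : Ne' u) (hu' : Ne' u'), u = u' →
          (RR B).2.1 u hu = (RR B).2.1 u' hu' := by
        intro Γ u u' hu hu' e; cases e; rfl
      ⟨fun {Γ} f => Tm.lam ((RR B).1 (f.1 (A :: Γ) Ren.wk ((RR A).2.1 (Tm.var .zero) (Ne'.var _)))),
       ⟨fun {Γ} t h =>
          ⟨fun Θ r a => (RR B).2.1 (Tm.app (rename r t) ((RR A).1 a))
              (Ne'.app (ne_rename h r) ((RR A).2.2.1 a)),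
           by
            intro Θ Θ' r r' a
            show renVal r' ((RR B).2.1 (Tm.app (rename r t) ((RR A).1 a))
                (Ne'.app (ne_rename h r) ((RR A).2.2.1 a))) =
              (RR B).2.1 (Tm.app (rename (fun C v => r' C (r C v)) t) ((RR A).1 (renVal r' a)))
                (Ne'.app (ne_rename h (fun C v => r' C (r C v))) ((RR A).2.2.1 (renVal r' a)))
            rw [(RR B).2.2.2.2 r' _ _]
            apply hcongr
            show Tm.app (rename r' (rename r t)) (rename r' ((RR A).1 a)) = _
            rw [rename_rename, (RR A).2.2.2.1 r' a]⟩,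
        ⟨fun {Γ} f => Nf.lam ((RR B).2.2.1 _),
         by
          intro Γ Θ r f
          show Tm.lam (rename (Ren.lift r) ((RR B).1
            (f.1 (A :: Γ) Ren.wk ((RR A).2.1 (Tm.var .zero) (Ne'.var _))))) =
            Tm.lam ((RR B).1 ((renVal r f).1 (A :: Θ) Ren.wk ((RR A).2.1 (Tm.var .zero) (Ne'.var _))))
          rw [(RR B).2.2.2.1 (Ren.lift r) _, val_nat f Ren.wk (Ren.lift r) _,
            (RR A).2.2.2.2 (Ren.lift r) _ _]
          rfl,
         by
          intro Γ Θ r t h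
          apply Subtype.ext
          funext Θ2 r2 a
          show (RR B).2.1 (Tm.app (rename (fun C v => r2 C (r C v)) t) ((RR A).1 a)) _ =
            (RR B).2.1 (Tm.app (rename r2 (rename r t)) ((RR A).1 a)) _
          apply hcongr
          rw [rename_rename]⟩⟩⟩

end NBE
namespace NBE

def reify {Γ : Ctx} {A : Ty} (a : Val A Γ) : Tm Γ A := (RR A).1 a
def reflect {Γ : Ctx} {A : Ty} (t : Tm Γ A) (h : Ne' t) : Val A Γ := (RR A).2.1 t h

theorem reify_nf {Γ : Ctx} {A : Ty} (a : Val A Γ) : Nf (reify a) := (RR A).2.2.1 a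

theorem reify_ren {Γ Θ : Ctx} {A : Ty} (r : Ren Θ Γ) (a : Val A Γ) :
    rename r (reify a) = reify (renVal r a) := (RR A).2.2.2.1 r a

theorem reflect_ren {Γ Θ : Ctx} {A : Ty} (r : Ren Θ Γ) (t : Tm Γ A) (h : Ne' t) :
    renVal r (reflect t h) = reflect (rename r t) (ne_rename h r) := (RR A).2.2.2.2 r t h

theorem reflect_congr {Γ : Ctx} {A : Ty} {u u' : Tm Γ A} (hu : Ne' u) (hu' : Ne' u')
    (e : u = u') : reflect u hu = reflect u' hu' := by cases e; rfl

def idEnv (Γ : Ctx) : Env Γ Γ := fun _ v => reflect (Tm.var v) (Ne'.var v)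

def nbe {Γ : Ctx} {A : Ty} (t : Tm Γ A) : Tm Γ A := reify ((eval t).1 Γ (idEnv Γ))

/-! ### The logical relation between terms and values -/

def Rel : ∀ (A : Ty) {Γ : Ctx}, Tm Γ A → Val A Γ → Prop
  | .unit, _, _, _ => True
  | .ans, _, t, a => Jeq t a.1
  | .prod A B, _, t, p => Rel A (Tm.fst t) p.1 ∧ Rel B (Tm.snd t) p.2
  | .arrow A B, Γ, t, f => ∀ (Θ : Ctx) (r : Ren Θ Γ) (s : Tm Θ A) (a : Val A Θ),
      Rel A s a → Rel B (Tm.app (rename r t) s) (f.1 Θ r a)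

theorem rel_jeq : ∀ (A : Ty) {Γ : Ctx} {t t' : Tm Γ A} {a : Val A Γ},
    Jeq t t' → Rel A t a → Rel A t' a
  | .unit, _, _, _, _, _, _ => trivial
  | .ans, _, _, _, _, h, hr => h.symm.trans hr
  | .prod A B, _, _, _, _, h, hr =>
      ⟨rel_jeq A (Jeq.fst_congr h) hr.1, rel_jeq B (Jeq.snd_congr h) hr.2⟩
  | .arrow A B, _, _, _, _, h, hr => fun Θ r s a ha =>
      rel_jeq B (Jeq.app_congr (jeq_ren h r) (Jeq.refl s)) (hr Θ r s a ha)

theorem rel_ren : ∀ (A : Ty) {Γ Θ : Ctx} (r : Ren Θ Γ) {t : Tm Γ A} {a : Val A Γ},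
    Rel A t a → Rel A (rename r t) (renVal r a)
  | .unit, _, _, _, _, _, _ => trivial
  | .ans, _, _, r, _, _, h => jeq_ren h r
  | .prod A B, _, _, r, _, _, h => ⟨rel_ren A r h.1, rel_ren B r h.2⟩
  | .arrow A B, _, _, r, t, f, h => fun Θ2 r2 s a ha => by
      have h2 := h Θ2 (fun C v => r2 C (r C v)) s a ha
      rw [← rename_rename] at h2
      exact h2

theorem rel_adequate : ∀ A : Ty,
    (∀ {Γ : Ctx} (t : Tm Γ A) (a : Val A Γ), Rel A t a → Jeq t (reify a)) ∧
    (∀ {Γ : Ctx} (t : Tm Γ A) (h : Ne' t), Rel A t (reflect t h))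
  | .unit => ⟨fun t _ _ => Jeq.eta_unit t, fun _ _ => trivial⟩
  | .ans => ⟨fun _ _ h => h, fun t _ => Jeq.refl t⟩
  | .prod A B =>
      ⟨fun t p h => (Jeq.eta_pair t).trans
        (Jeq.pair_congr ((rel_adequate A).1 _ _ h.1) ((rel_adequate B).1 _ _ h.2)),
       fun t h => ⟨(rel_adequate A).2 (Tm.fst t) (Ne'.fst h),
                   (rel_adequate B).2 (Tm.snd t) (Ne'.snd h)⟩⟩
  | .arrow A B =>
      ⟨fun {Γ} t f h => by
        refine (Jeq.eta t).trans (Jeq.lam_congr ?_)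
        have h0 := (rel_adequate A).2 (Γ := A :: Γ) (Tm.var .zero) (Ne'.var .zero)
        have h1 := h _ Ren.wk (Tm.var .zero) _ h0
        exact (rel_adequate B).1 _ _ h1,
       fun t h => fun Θ r s a ha => by
        have h1 := (rel_adequate B).2 (Tm.app (rename r t) (reify a))
          (Ne'.app (ne_rename h r) (reify_nf a))
        exact rel_jeq B
          (Jeq.app_congr (Jeq.refl _) ((rel_adequate A).1 s a ha).symm) h1⟩

/-! ### The fundamental lemma -/

def consSubst {Θ Γ : Ctx} {A : Ty} (s : Tm Θ A) (σ : Subst Θ Γ) : Subst Θ (A :: Γ)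
  | _, .zero => s
  | _, .succ v => σ _ v

theorem subst1_lift {Γ Θ Θ2 : Ctx} {A B : Ty} (σ : Subst Θ Γ) (r : Ren Θ2 Θ)
    (s : Tm Θ2 A) (t : Tm (A :: Γ) B) :
    subst1 s (rename (Ren.lift r) (subst (Subst.lift σ) t)) =
      subst (consSubst s (fun B v => rename r (σ B v))) t := by
  unfold subst1
  rw [subst_rename]
  refine (subst_subst _ _ _).trans ?_
  refine congrArg (fun τ => subst τ t) ?_
  funext B v
  cases v with
  | zero => rfl
  | succ v =>
      show subst _ (rename Ren.wk (σ B v)) = rename r (σ B v)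
      refine (subst_rename _ _ _).trans ?_
      exact subst_of_ren (σ B v) r

theorem fundamental {Γ : Ctx} {A : Ty} (t : Tm Γ A) : ∀ {Θ : Ctx} (σ : Subst Θ Γ) (ρ : Env Γ Θ),
    (∀ B (v : Var Γ B), Rel B (σ B v) (ρ B v)) → Rel A (subst σ t) ((eval t).1 Θ ρ) := by
  induction t with
  | var v => intro Θ σ ρ hσ; exact hσ _ v
  | yes => intro Θ σ ρ hσ; exact Jeq.refl _
  | no => intro Θ σ ρ hσ; exact Jeq.refl _
  | unit => intro Θ σ ρ hσ; trivial
  | pair a b iha ihb =>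
      intro Θ σ ρ hσ
      exact ⟨rel_jeq _ (Jeq.beta_fst _ _).symm (iha σ ρ hσ),
             rel_jeq _ (Jeq.beta_snd _ _).symm (ihb σ ρ hσ)⟩
  | fst p ihp => intro Θ σ ρ hσ; exact (ihp σ ρ hσ).1
  | snd p ihp => intro Θ σ ρ hσ; exact (ihp σ ρ hσ).2
  | app f a ihf iha =>
      intro Θ σ ρ hσ
      have h2 := ihf σ ρ hσ Θ (fun _ v => v) (subst σ a) _ (iha σ ρ hσ)
      rw [rename_id] at h2
      exact h2
  | lam t ih =>
      intro Θ σ ρ hσ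
      intro Θ2 r s a ha
      have hσ' : ∀ B (v : Var (_ :: _) B),
          Rel B (consSubst s (fun B v => rename r (σ B v)) B v)
            (consEnv a (renEnv r ρ) B v) := by
        intro B v
        cases v with
        | zero => exact ha
        | succ v => exact rel_ren _ r (hσ B v)
      have hih := ih _ (consEnv a (renEnv r ρ)) hσ'
      refine rel_jeq _ ?_ hih
      rw [← subst1_lift σ r s t]
      exact (Jeq.beta _ s).symm

end NBE
namespace NBE

theorem eval_rename {Γ A} (t : Tm Γ A) : ∀ {Δ Θ : Ctx} (r : Ren Δ Γ) (ρ : Env Δ Θ),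
    (eval (rename r t)).1 Θ ρ = (eval t).1 Θ (fun B v => ρ B (r B v)) := by
  induction t with
  | var v => intros; rfl
  | yes => intros; rfl
  | no => intros; rfl
  | unit => intros; rfl
  | pair a b iha ihb =>
      intro Δ Θ r ρ
      show ((eval (rename r a)).1 Θ ρ, (eval (rename r b)).1 Θ ρ) = _
      rw [iha, ihb]
      rfl
  | fst p ih =>
      intro Δ Θ r ρ
      show ((eval (rename r p)).1 Θ ρ).1 = _
      rw [ih]
      rfl
  | snd p ih =>
      intro Δ Θ r ρ
      show ((eval (rename r p)).1 Θ ρ).2 = _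
      rw [ih]
      rfl
  | app f a ihf iha =>
      intro Δ Θ r ρ
      show ((eval (rename r f)).1 Θ ρ).1 Θ (fun _ v => v) ((eval (rename r a)).1 Θ ρ) = _
      rw [ihf, iha]
      rfl
  | lam t ih =>
      intro Δ Θ r ρ
      apply Subtype.ext
      funext Θ2 r2 a
      show (eval (rename (Ren.lift r) t)).1 Θ2 (consEnv a (renEnv r2 ρ)) =
        (eval t).1 Θ2 (consEnv a (renEnv r2 (fun B v => ρ B (r B v))))
      rw [ih]
      refine congrArg ((eval t).1 Θ2) ?_
      funext B v
      cases v <;> rfl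

theorem eval_subst {Γ A} (t : Tm Γ A) : ∀ {Δ Θ : Ctx} (σ : Subst Δ Γ) (ρ : Env Δ Θ),
    (eval (subst σ t)).1 Θ ρ = (eval t).1 Θ (fun B v => (eval (σ B v)).1 Θ ρ) := by
  induction t with
  | var v => intros; rfl
  | yes => intros; rfl
  | no => intros; rfl
  | unit => intros; rfl
  | pair a b iha ihb =>
      intro Δ Θ σ ρ
      show ((eval (subst σ a)).1 Θ ρ, (eval (subst σ b)).1 Θ ρ) = _
      rw [iha, ihb]
      rfl
  | fst p ih =>
      intro Δ Θ σ ρ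
      show ((eval (subst σ p)).1 Θ ρ).1 = _
      rw [ih]
      rfl
  | snd p ih =>
      intro Δ Θ σ ρ
      show ((eval (subst σ p)).1 Θ ρ).2 = _
      rw [ih]
      rfl
  | app f a ihf iha =>
      intro Δ Θ σ ρ
      show ((eval (subst σ f)).1 Θ ρ).1 Θ (fun _ v => v) ((eval (subst σ a)).1 Θ ρ) = _
      rw [ihf, iha]
      rfl
  | lam t ih =>
      intro Δ Θ σ ρ
      apply Subtype.ext
      funext Θ2 r2 a
      show (eval (subst (Subst.lift σ) t)).1 Θ2 (consEnv a (renEnv r2 ρ)) =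
        (eval t).1 Θ2 (consEnv a (renEnv r2 (fun B v => (eval (σ B v)).1 Θ ρ)))
      rw [ih]
      refine congrArg ((eval t).1 Θ2) ?_
      funext B v
      cases v with
      | zero => rfl
      | succ v =>
          show (eval (rename Ren.wk (σ B v))).1 Θ2 (consEnv a (renEnv r2 ρ)) =
            renVal r2 ((eval (σ B v)).1 Θ ρ)
          rw [eval_rename, (eval (σ B v)).2 Θ Θ2 ρ r2]
          rfl

theorem sound {Γ A} {t s : Tm Γ A} (h : Jeq t s) : ∀ {Θ : Ctx} (ρ : Env Γ Θ),
    (eval t).1 Θ ρ = (eval s).1 Θ ρ := by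
  induction h with
  | refl t => intros; rfl
  | symm _ ih => intro Θ ρ; exact (ih ρ).symm
  | trans _ _ ih1 ih2 => intro Θ ρ; exact (ih1 ρ).trans (ih2 ρ)
  | pair_congr _ _ ih1 ih2 =>
      intro Θ ρ
      rename_i a a' b b' hx hy
      show ((eval a).1 Θ ρ, (eval b).1 Θ ρ) = ((eval a').1 Θ ρ, (eval b').1 Θ ρ)
      rw [ih1 ρ, ih2 ρ]
  | fst_congr _ ih =>
      intro Θ ρ
      rename_i p p' hx
      show ((eval p).1 Θ ρ).1 = ((eval p').1 Θ ρ).1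
      rw [ih ρ]
  | snd_congr _ ih =>
      intro Θ ρ
      rename_i p p' hx
      show ((eval p).1 Θ ρ).2 = ((eval p').1 Θ ρ).2
      rw [ih ρ]
  | app_congr _ _ ih1 ih2 =>
      intro Θ ρ
      rename_i f f' a a' hx hy
      show ((eval f).1 Θ ρ).1 Θ (fun _ v => v) ((eval a).1 Θ ρ) =
        ((eval f').1 Θ ρ).1 Θ (fun _ v => v) ((eval a').1 Θ ρ)
      rw [ih1 ρ, ih2 ρ]
  | lam_congr _ ih =>
      intro Θ ρ
      apply Subtype.ext
      funext Θ2 r2 a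
      exact ih (consEnv a (renEnv r2 ρ))
  | beta t a =>
      intro Θ ρ
      show (eval t).1 Θ (consEnv ((eval a).1 Θ ρ) (renEnv (fun _ v => v) ρ)) =
        (eval (subst1 a t)).1 Θ ρ
      rw [show subst1 a t = subst (Subst.single a) t from rfl, eval_subst]
      refine congrArg ((eval t).1 Θ) ?_
      funext B v
      cases v with
      | zero => rfl
      | succ v => exact renVal_id B (ρ B v)
  | eta f =>
      intro Θ ρ
      apply Subtype.ext
      funext Θ2 r2 a
      have e1 : (eval (Tm.app (rename Ren.wk f) (Tm.var .zero))).1 Θ2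
            (consEnv a (renEnv r2 ρ)) =
          ((eval f).1 Θ2 (renEnv r2 ρ)).1 Θ2 (fun _ v => v) a := by
        show ((eval (rename Ren.wk f)).1 Θ2 (consEnv a (renEnv r2 ρ))).1 Θ2 (fun _ v => v) a = _
        rw [eval_rename]
        rfl
      show ((eval f).1 Θ ρ).1 Θ2 r2 a = (eval (Tm.app (rename Ren.wk f) (Tm.var .zero))).1 Θ2
        (consEnv a (renEnv r2 ρ))
      rw [e1, ← (eval f).2 Θ Θ2 ρ r2]
      rfl
  | beta_fst a b => intros; rfl
  | beta_snd a b => intros; rfl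
  | eta_pair p => intros; rfl
  | eta_unit t => intros; rfl

end NBE
namespace NBE

theorem complete {Γ : Ctx} {A : Ty} (t : Tm Γ A) : Jeq t (nbe t) := by
  have hσ : ∀ B (v : Var Γ B), Rel B (Tm.var v) (idEnv Γ B v) :=
    fun B v => (rel_adequate B).2 (Tm.var v) (Ne'.var v)
  have h := fundamental t (fun _ v => Tm.var v) (idEnv Γ) hσ
  rw [subst_id] at h
  exact (rel_adequate A).1 _ _ h

theorem fix_aux {Γ0 : Ctx} {A0 : Ty} (t : Tm Γ0 A0) :
    (Nf t → reify ((eval t).1 Γ0 (idEnv Γ0)) = t) ∧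
    (∀ h : Ne' t, (eval t).1 Γ0 (idEnv Γ0) = reflect t h) := by
  induction t with
  | var v =>
      refine ⟨fun hnf => ?_, fun h => rfl⟩
      cases hnf with
      | ne_ans hne => rfl
  | yes => exact ⟨fun _ => rfl, fun h => by cases h⟩
  | no => exact ⟨fun _ => rfl, fun h => by cases h⟩
  | unit => exact ⟨fun _ => rfl, fun h => by cases h⟩
  | pair a b iha ihb =>
      rename_i Γ A B
      refine ⟨fun hnf => ?_, fun h => by cases h⟩
      cases hnf with
      | pair ha hb =>
          show Tm.pair (reify ((eval a).1 Γ (idEnv Γ))) (reify ((eval b).1 Γ (idEnv Γ))) =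
            Tm.pair a b
          rw [iha.1 ha, ihb.1 hb]
  | fst p ihp =>
      rename_i Γ A B
      have hne : ∀ h : Ne' (Tm.fst p), (eval (Tm.fst p)).1 Γ (idEnv Γ) = reflect (Tm.fst p) h := by
        intro h
        cases h with
        | fst hp =>
            show ((eval p).1 Γ (idEnv Γ)).1 = _
            rw [ihp.2 hp]
            rfl
      refine ⟨fun hnf => ?_, hne⟩
      cases hnf with
      | ne_ans h2 => rw [show reify ((eval (Tm.fst p)).1 Γ (idEnv Γ)) =
          ((eval (Tm.fst p)).1 Γ (idEnv Γ)).1 from rfl, hne h2]; rfl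
  | snd p ihp =>
      rename_i Γ A B
      have hne : ∀ h : Ne' (Tm.snd p), (eval (Tm.snd p)).1 Γ (idEnv Γ) = reflect (Tm.snd p) h := by
        intro h
        cases h with
        | snd hp =>
            show ((eval p).1 Γ (idEnv Γ)).2 = _
            rw [ihp.2 hp]
            rfl
      refine ⟨fun hnf => ?_, hne⟩
      cases hnf with
      | ne_ans h2 => rw [show reify ((eval (Tm.snd p)).1 Γ (idEnv Γ)) =
          ((eval (Tm.snd p)).1 Γ (idEnv Γ)).1 from rfl, hne h2]; rfl
  | app f a ihf iha =>
      rename_i Γ A B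
      have hne : ∀ h : Ne' (Tm.app f a),
          (eval (Tm.app f a)).1 Γ (idEnv Γ) = reflect (Tm.app f a) h := by
        intro h
        cases h with
        | app hf ha =>
            have e1 : (eval (Tm.app f a)).1 Γ (idEnv Γ) =
                reflect (Tm.app (rename (fun _ v => v) f) (reify ((eval a).1 Γ (idEnv Γ))))
                  (Ne'.app (ne_rename hf _) (reify_nf _)) := by
              show ((eval f).1 Γ (idEnv Γ)).1 Γ (fun _ v => v) ((eval a).1 Γ (idEnv Γ)) = _
              rw [ihf.2 hf]
              rfl
            exact e1.trans (reflect_congr _ _ (by rw [rename_id, iha.1 ha]))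
      refine ⟨fun hnf => ?_, hne⟩
      cases hnf with
      | ne_ans h2 => rw [show reify ((eval (Tm.app f a)).1 Γ (idEnv Γ)) =
          ((eval (Tm.app f a)).1 Γ (idEnv Γ)).1 from rfl, hne h2]; rfl
  | lam t iht =>
      rename_i Γ A B
      refine ⟨fun hnf => ?_, fun h => by cases h⟩
      cases hnf with
      | lam hnf' =>
          have eenv : consEnv (reflect (Tm.var (Var.zero (Γ := Γ) (A := A))) (Ne'.var _))
              (renEnv Ren.wk (idEnv Γ)) = idEnv (A :: Γ) := by
            funext C v
            cases v with
            | zero => rfl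
            | succ v =>
                show renVal Ren.wk (reflect (Tm.var v) (Ne'.var v)) =
                  reflect (Tm.var (Var.succ v)) (Ne'.var _)
                rw [reflect_ren]
                rfl
          show Tm.lam (reify ((eval t).1 (A :: Γ)
            (consEnv (reflect (Tm.var .zero) (Ne'.var _)) (renEnv Ren.wk (idEnv Γ))))) = Tm.lam t
          rw [eenv, iht.1 hnf']

end NBE
/-- Normalization: there is a function `nbe` on well-typed terms producing
normal forms, such that (1) βη-equal terms have equal normal forms, (2) terms
with equal normal forms are βη-equal, and (3) normal forms are fixed points. -/
theorem normalization :
    ∃ nbe : ∀ {Γ : Ctx} {A : Ty}, Tm Γ A → Tm Γ A,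
      (∀ {Γ : Ctx} {A : Ty} (t : Tm Γ A), Nf (nbe t)) ∧
      (∀ {Γ : Ctx} {A : Ty} (t s : Tm Γ A), Jeq t s → nbe t = nbe s) ∧
      (∀ {Γ : Ctx} {A : Ty} (t s : Tm Γ A), nbe t = nbe s → Jeq t s) ∧
      (∀ {Γ : Ctx} {A : Ty} (t : Tm Γ A), Nf t → nbe t = t) := by
  refine ⟨fun {Γ A} t => NBE.nbe t, fun t => NBE.reify_nf _,
    fun t s h => congrArg NBE.reify (NBE.sound h _),
    fun t s h => (NBE.complete t).trans ?_,
    fun t h => (NBE.fix_aux t).1 h⟩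
  rw [show NBE.nbe t = NBE.nbe s from h]
  exact (NBE.complete s).symm
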